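/- Let a, b ≥ 1 be integers, N = 2^a·3^b, n ≥ 1, and let i_j ∈ {0, …, N−1} for −n ≤ j ≤ n. Set D = Σ_{m=0}^{n} i_{−m} / N^{m+1} and C = Σ_{m=1}^{n} i_m N^{m−1}. Then the atom of the refined partition is a single rectangle: {x ∈ F : rep(N^m·x) ∈ A_{i_{−m}} for all 0 ≤ m ≤ n, and rep(N^{−m}·x) ∈ A_{i_m} for all 1 ≤ m ≤ n} = [D, D + 1/N^{n+1}) × (2^{an}ℤ₂ − C) × (3^{bn}ℤ₃ − C); in particular it has real width 1/N^{n+1}, 2-adic diameter 2^{−an} and 3-adic diameter 3^{−bn}. -/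

import Mathlib

open Set

noncomputable section

/-- The ambient group `G = ℝ × ℚ₂ × ℚ₃`. -/
abbrev G : Type := ℝ × ℚ_[2] × ℚ_[3]

/-- The diagonal embedding of `ℚ` into `G`. -/
def Δ (r : ℚ) : G := ((r : ℝ), (r : ℚ_[2]), (r : ℚ_[3]))

/-- `ℤ[1/6]`, the rationals expressible with denominator `6^k`. -/
def zInv6 : Set ℚ := {q | ∃ (z : ℤ) (k : ℕ), q = z / 6 ^ k}

/-- `Γ = Δ(ℤ[1/6])`. -/
def Γ : Set G := Δ '' zInv6

/-- The fundamental domain `F = [0,1) × ℤ₂ × ℤ₃`. -/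
def F : Set G := {x | x.1 ∈ Set.Ico (0 : ℝ) 1 ∧ ‖x.2.1‖ ≤ 1 ∧ ‖x.2.2‖ ≤ 1}

/-- Coordinatewise multiplication by a rational on `G`. -/
def act (q : ℚ) (x : G) : G :=
  ((q : ℝ) * x.1, (q : ℚ_[2]) * x.2.1, (q : ℚ_[3]) * x.2.2)

/-- The atom `A_k = [k/N, (k+1)/N) × ℤ₂ × ℤ₃` of the partition `ξ`. -/
def A (N k : ℕ) : Set G :=
  {x | x.1 ∈ Set.Ico ((k : ℝ) / N) (((k : ℝ) + 1) / N) ∧ ‖x.2.1‖ ≤ 1 ∧ ‖x.2.2‖ ≤ 1}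

lemma zInv6_intCast (z : ℤ) : (z : ℚ) ∈ zInv6 := ⟨z, 0, by simp⟩

lemma zInv6_div23 (c : ℤ) (j l : ℕ) : (c : ℚ) / (2 ^ j * 3 ^ l) ∈ zInv6 := by
  refine ⟨c * 2 ^ l * 3 ^ j, j + l, ?_⟩
  have : ((6 : ℚ)) ^ (j + l) = 2 ^ (j+l) * 3 ^ (j+l) := by
    rw [← mul_pow]; norm_num
  rw [this]
  push_cast
  rw [div_eq_div_iff (by positivity) (by positivity)]
  ring

lemma zInv6_sub {p q : ℚ} (hp : p ∈ zInv6) (hq : q ∈ zInv6) : p - q ∈ zInv6 := by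
  obtain ⟨z1, k1, rfl⟩ := hp
  obtain ⟨z2, k2, rfl⟩ := hq
  refine ⟨z1 * 6 ^ k2 - z2 * 6 ^ k1, k1 + k2, ?_⟩
  push_cast
  rw [div_sub_div _ _ (by positivity) (by positivity), pow_add]
  ring_nf

lemma zInv6_int_mul {q : ℚ} (z : ℤ) (hq : q ∈ zInv6) : (z : ℚ) * q ∈ zInv6 := by
  obtain ⟨z1, k1, rfl⟩ := hq
  exact ⟨z * z1, k1, by push_cast; ring⟩

lemma norm2_three : ‖(3 : ℚ_[2])‖ = 1 := by
  have h1 : ‖((3:ℤ) : ℚ_[2])‖ ≤ 1 := Padic.norm_int_le_one 3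
  have h2 : ¬ ‖((3:ℤ) : ℚ_[2])‖ < 1 := by
    rw [Padic.norm_intCast_lt_one_iff]; decide
  push_cast at h1 h2
  linarith [lt_or_eq_of_le h1]
  
lemma norm3_two : ‖(2 : ℚ_[3])‖ = 1 := by
  have h1 : ‖((2:ℤ) : ℚ_[3])‖ ≤ 1 := Padic.norm_int_le_one 2
  have h2 : ¬ ‖((2:ℤ) : ℚ_[3])‖ < 1 := by
    rw [Padic.norm_intCast_lt_one_iff]; decide
  push_cast at h1 h2
  linarith [lt_or_eq_of_le h1]

lemma norm_int_le_pow_inv {p : ℕ} [hp : Fact p.Prime] (d : ℤ) (k : ℕ) :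
    ‖(d : ℚ_[p])‖ ≤ ((p : ℝ) ^ k)⁻¹ ↔ ((p : ℤ) ^ k) ∣ d := by
  rw [← Padic.norm_int_le_pow_iff_dvd, zpow_neg, zpow_natCast]

lemma int_of_zInv6 {q : ℚ} (hq : q ∈ zInv6) (h2 : ‖((q : ℚ) : ℚ_[2])‖ ≤ 1)
    (h3 : ‖((q : ℚ) : ℚ_[3])‖ ≤ 1) : ∃ z : ℤ, q = (z : ℚ) := by
  obtain ⟨z, k, rfl⟩ := hq
  have hz2 : ‖((z:ℤ) : ℚ_[2])‖ ≤ ((2:ℝ) ^ k)⁻¹ := by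
    have he : ((z:ℤ) : ℚ_[2]) = (((z / 6^k : ℚ) : ℚ_[2])) * ((6:ℚ_[2]))^k := by
      push_cast
      field_simp
    rw [he, norm_mul]
    have h6n : ‖(6 : ℚ_[2])‖ = 2⁻¹ := by
      rw [show (6 : ℚ_[2]) = 2 * 3 by norm_num, norm_mul, norm2_three, mul_one]
      simpa using Padic.norm_p (p := 2)
    rw [norm_pow, h6n]
    calc ‖((z / 6^k : ℚ) : ℚ_[2])‖ * (2:ℝ)⁻¹ ^ k ≤ 1 * (2:ℝ)⁻¹ ^ k := by
          apply mul_le_mul_of_nonneg_right h2; positivity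
      _ = ((2:ℝ) ^ k)⁻¹ := by rw [one_mul, inv_pow]
  have hz3 : ‖((z:ℤ) : ℚ_[3])‖ ≤ ((3:ℝ) ^ k)⁻¹ := by
    have he : ((z:ℤ) : ℚ_[3]) = (((z / 6^k : ℚ) : ℚ_[3])) * ((6:ℚ_[3]))^k := by
      push_cast
      field_simp
    rw [he, norm_mul]
    have h6n : ‖(6 : ℚ_[3])‖ = 3⁻¹ := by
      have : (6 : ℚ_[3]) = 2 * 3 := by norm_num
      rw [this, norm_mul, norm3_two, one_mul]
      simpa using Padic.norm_p (p := 3)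
    rw [norm_pow, h6n]
    calc ‖((z / 6^k : ℚ) : ℚ_[3])‖ * (3:ℝ)⁻¹ ^ k ≤ 1 * (3:ℝ)⁻¹ ^ k := by
          apply mul_le_mul_of_nonneg_right h3; positivity
      _ = ((3:ℝ) ^ k)⁻¹ := by rw [one_mul, inv_pow]
  have hz2' : ((2:ℤ)^k) ∣ z := by
    exact_mod_cast (norm_int_le_pow_inv (p := 2) z k).mp (by simpa using hz2)
  have hz3' : ((3:ℤ)^k) ∣ z := by
    exact_mod_cast (norm_int_le_pow_inv (p := 3) z k).mp (by simpa using hz3)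
  have hcop : IsCoprime ((2:ℤ)^k) ((3:ℤ)^k) := by
    apply IsCoprime.pow
    rw [Int.isCoprime_iff_gcd_eq_one]; decide
  obtain ⟨w, hw⟩ := hcop.mul_dvd hz2' hz3'
  refine ⟨w, ?_⟩
  rw [hw]
  have : ((6:ℚ))^k = 2^k*3^k := by rw [← mul_pow]; norm_num
  rw [this]
  push_cast
  field_simp

lemma padic_sub_max {p : ℕ} [Fact p.Prime] (s t : ℚ_[p]) : ‖s - t‖ ≤ max ‖s‖ ‖t‖ := by
  have := Padic.nonarchimedean s (-t)
  simpa [sub_eq_add_neg] using this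

lemma Delta_sub (p q : ℚ) : Δ p - Δ q = Δ (p - q) := by
  simp [Δ, Prod.ext_iff]

lemma rep_unique {rep : G → G} (hrep : ∀ x : G, rep x ∈ F ∧ x - rep x ∈ Γ)
    {x y : G} (hy : y ∈ F) (hxy : x - y ∈ Γ) : rep x = y := by
  obtain ⟨hrF, hrΓ⟩ := hrep x
  obtain ⟨q1, hq1, e1⟩ := hrΓ
  obtain ⟨q2, hq2, e2⟩ := hxy
  have key : rep x - y = Δ (q2 - q1) := by
    rw [← Delta_sub, e2, e1]; abel
  set q := q2 - q1 with hqdef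
  have hqm : q ∈ zInv6 := zInv6_sub hq2 hq1
  obtain ⟨hr1, hr2, hr3⟩ := hrF
  obtain ⟨hy1, hy2, hy3⟩ := hy
  have k1 : (rep x).1 - y.1 = ((q : ℚ) : ℝ) := congrArg Prod.fst key
  have k2 : (rep x).2.1 - y.2.1 = ((q : ℚ) : ℚ_[2]) := congrArg (fun z : G => z.2.1) key
  have k3 : (rep x).2.2 - y.2.2 = ((q : ℚ) : ℚ_[3]) := congrArg (fun z : G => z.2.2) key
  have n2 : ‖((q : ℚ) : ℚ_[2])‖ ≤ 1 := by
    rw [← k2]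
    exact le_trans (padic_sub_max _ _) (max_le hr2 hy2)
  have n3 : ‖((q : ℚ) : ℚ_[3])‖ ≤ 1 := by
    rw [← k3]
    exact le_trans (padic_sub_max _ _) (max_le hr3 hy3)
  obtain ⟨z, hz⟩ := int_of_zInv6 hqm n2 n3
  simp only [mem_Ico] at hr1 hy1
  have habs : ((z : ℝ)) < 1 ∧ (-1 : ℝ) < z := by
    have : ((q:ℚ) : ℝ) = (z : ℝ) := by rw [hz]; push_cast; rfl
    rw [this] at k1
    constructor <;> nlinarith [hr1.1, hr1.2, hy1.1, hy1.2]
  have hz0 : z = 0 := by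
    have h1 : z < 1 := by exact_mod_cast habs.1
    have h2 : -1 < z := by exact_mod_cast habs.2
    omega
  have e : rep x - y = 0 := by
    rw [key, hz, hz0]
    simp [Δ, Prod.ext_iff]
  exact sub_eq_zero.mp e

lemma A_subset_F {N k : ℕ} (hk : k < N) : A N k ⊆ F := by
  intro x hx
  obtain ⟨hx1, hx2, hx3⟩ := hx
  have hN : (0:ℝ) < N := by exact_mod_cast Nat.pos_of_ne_zero (by omega)
  simp only [mem_Ico] at hx1
  refine ⟨?_, hx2, hx3⟩
  simp only [mem_Ico]
  constructor
  · have : (0:ℝ) ≤ (k:ℝ)/N := by positivity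
    linarith [hx1.1]
  · have hkN : ((k:ℝ) + 1) / N ≤ 1 := by
      rw [div_le_one hN]
      exact_mod_cast Nat.succ_le_of_lt hk
    linarith [hx1.2]

lemma rep_mem_A_iff {rep : G → G} (hrep : ∀ x : G, rep x ∈ F ∧ x - rep x ∈ Γ)
    {N k : ℕ} (hk : k < N) (y : G) :
    rep y ∈ A N k ↔ ∃ q ∈ zInv6, y - Δ q ∈ A N k := by
  constructor
  · intro h
    obtain ⟨_, hΓ⟩ := hrep y
    obtain ⟨q, hq, e⟩ := hΓ
    refine ⟨q, hq, ?_⟩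
    rw [e]
    simpa using h
  · rintro ⟨q, hq, hA⟩
    have := rep_unique hrep (x := y) (A_subset_F hk hA) ⟨q, hq, by abel⟩
    rw [this]; exact hA

lemma tuple_mem_A_iff {N k : ℕ} {t : ℝ} {u : ℚ_[2]} {v : ℚ_[3]} :
    ((t,u,v) : G) ∈ A N k ↔ ((k:ℝ)/N ≤ t ∧ t < ((k:ℝ)+1)/N) ∧ ‖u‖ ≤ 1 ∧ ‖v‖ ≤ 1 := by
  simp [A, mem_Ico]

lemma norm2_two : ‖(2 : ℚ_[2])‖ = 2⁻¹ := by simpa using Padic.norm_p (p := 2)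
lemma norm3_three : ‖(3 : ℚ_[3])‖ = 3⁻¹ := by simpa using Padic.norm_p (p := 3)

lemma norm2_N_pow (a b m : ℕ) : ‖(((2^a*3^b : ℕ) : ℚ_[2]))^m‖ = ((2:ℝ)^(a*m))⁻¹ := by
  have h : (((2^a*3^b : ℕ)) : ℚ_[2]) = 2^a * 3^b := by push_cast; ring
  rw [h, norm_pow, norm_mul, norm_pow, norm_pow, norm2_two, norm2_three]
  rw [one_pow, mul_one, ← pow_mul, inv_pow]

lemma norm3_N_pow (a b m : ℕ) : ‖(((2^a*3^b : ℕ) : ℚ_[3]))^m‖ = ((3:ℝ)^(b*m))⁻¹ := by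
  have h : (((2^a*3^b : ℕ)) : ℚ_[3]) = 2^a * 3^b := by push_cast; ring
  rw [h, norm_pow, norm_mul, norm_pow, norm_pow, norm3_two, norm3_three]
  rw [one_pow, one_mul, ← pow_mul, inv_pow]

lemma norm2_nat_le_one (N : ℕ) : ‖((N : ℕ) : ℚ_[2])‖ ≤ 1 := by
  have := Padic.norm_int_le_one (p := 2) (N : ℤ)
  push_cast at this; exact this

lemma norm3_nat_le_one (N : ℕ) : ‖((N : ℕ) : ℚ_[3])‖ ≤ 1 := by
  have := Padic.norm_int_le_one (p := 3) (N : ℤ)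
  push_cast at this; exact this

lemma pos_iff {rep : G → G} (hrep : ∀ x : G, rep x ∈ F ∧ x - rep x ∈ Γ)
    {N : ℕ} (hN2 : 2 ≤ N) (t : ℝ) (u : ℚ_[2]) (v : ℚ_[3])
    (hu : ‖u‖ ≤ 1) (hv : ‖v‖ ≤ 1) (m k : ℕ) (hk : k < N) :
    rep (act ((N:ℚ)^(m:ℤ)) (t,u,v)) ∈ A N k ↔
    ∃ q : ℤ, (q:ℝ) + k/N ≤ (N:ℝ)^m*t ∧ (N:ℝ)^m*t < q + ((k:ℝ)+1)/N := by
  have hact : act ((N:ℚ)^(m:ℤ)) (t,u,v) = (((N:ℝ)^m*t, (N:ℚ_[2])^m*u, (N:ℚ_[3])^m*v) : G) := by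
    simp only [act]
    norm_cast
  have hNu : ‖(N:ℚ_[2])^m * u‖ ≤ 1 := by
    rw [norm_mul, norm_pow]
    calc ‖((N:ℕ):ℚ_[2])‖^m * ‖u‖ ≤ 1^m * 1 := by
          apply mul_le_mul (pow_le_pow_left₀ (norm_nonneg _) (norm2_nat_le_one N) m) hu (norm_nonneg _) (by norm_num)
      _ = 1 := by norm_num
  have hNv : ‖(N:ℚ_[3])^m * v‖ ≤ 1 := by
    rw [norm_mul, norm_pow]
    calc ‖((N:ℕ):ℚ_[3])‖^m * ‖v‖ ≤ 1^m * 1 := by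
          apply mul_le_mul (pow_le_pow_left₀ (norm_nonneg _) (norm3_nat_le_one N) m) hv (norm_nonneg _) (by norm_num)
      _ = 1 := by norm_num
  rw [hact, rep_mem_A_iff hrep hk]
  constructor
  · rintro ⟨q, hq, hA⟩
    have hsub : (((N:ℝ)^m*t, (N:ℚ_[2])^m*u, (N:ℚ_[3])^m*v) : G) - Δ q
        = (((N:ℝ)^m*t - q, (N:ℚ_[2])^m*u - q, (N:ℚ_[3])^m*v - q) : G) := rfl
    rw [hsub, tuple_mem_A_iff] at hA
    obtain ⟨⟨h1, h2⟩, h3, h4⟩ := hA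
    have n2 : ‖((q:ℚ):ℚ_[2])‖ ≤ 1 := by
      have e : ((q:ℚ):ℚ_[2]) = ((N:ℚ_[2])^m*u) - ((N:ℚ_[2])^m*u - q) := by ring
      rw [e]
      exact le_trans (padic_sub_max _ _) (max_le hNu h3)
    have n3 : ‖((q:ℚ):ℚ_[3])‖ ≤ 1 := by
      have e : ((q:ℚ):ℚ_[3]) = ((N:ℚ_[3])^m*v) - ((N:ℚ_[3])^m*v - q) := by ring
      rw [e]
      exact le_trans (padic_sub_max _ _) (max_le hNv h4)
    obtain ⟨z, rfl⟩ := int_of_zInv6 hq n2 n3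
    push_cast at h1 h2
    exact ⟨z, by linarith, by linarith⟩
  · rintro ⟨z, h1, h2⟩
    refine ⟨(z:ℚ), zInv6_intCast z, ?_⟩
    have hsub : (((N:ℝ)^m*t, (N:ℚ_[2])^m*u, (N:ℚ_[3])^m*v) : G) - Δ (z:ℚ)
        = (((N:ℝ)^m*t - ((z:ℚ):ℝ), (N:ℚ_[2])^m*u - ((z:ℚ):ℚ_[2]), (N:ℚ_[3])^m*v - ((z:ℚ):ℚ_[3])) : G) := rfl
    rw [hsub, tuple_mem_A_iff]
    have c2 : ‖(N:ℚ_[2])^m*u - ((z:ℚ):ℚ_[2])‖ ≤ 1 := by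
      refine le_trans (padic_sub_max _ _) (max_le hNu ?_)
      have := Padic.norm_int_le_one (p := 2) z
      push_cast at this ⊢; exact this
    have c3 : ‖(N:ℚ_[3])^m*v - ((z:ℚ):ℚ_[3])‖ ≤ 1 := by
      refine le_trans (padic_sub_max _ _) (max_le hNv ?_)
      have := Padic.norm_int_le_one (p := 3) z
      push_cast at this ⊢; exact this
    refine ⟨⟨?_, ?_⟩, c2, c3⟩ <;> push_cast <;> linarith

set_option maxHeartbeats 1000000 in
lemma neg_iff {rep : G → G} (hrep : ∀ x : G, rep x ∈ F ∧ x - rep x ∈ Γ)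
    (a b : ℕ) {N : ℕ} (hN : N = 2^a*3^b)
    (t : ℝ) (u : ℚ_[2]) (v : ℚ_[3]) (ht0 : 0 ≤ t) (ht1 : t < 1)
    (hu : ‖u‖ ≤ 1) (hv : ‖v‖ ≤ 1) (m k : ℕ) (hm : 1 ≤ m) (hk : k < N) :
    rep (act ((N:ℚ)^(-(m:ℤ))) (t,u,v)) ∈ A N k ↔
    ∃ c : ℤ, (-((k:ℤ)+1) * (N:ℤ)^(m-1) < c ∧ c ≤ -(k:ℤ) * (N:ℤ)^(m-1)) ∧
      ‖u - (c:ℚ_[2])‖ ≤ ((2:ℝ)^(a*m))⁻¹ ∧ ‖v - (c:ℚ_[3])‖ ≤ ((3:ℝ)^(b*m))⁻¹ := by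
  have hNpos' : 0 < N := by omega
  have hNpos : (0:ℝ) < (N:ℝ) := by exact_mod_cast hNpos'
  have hNm : (0:ℝ) < (N:ℝ)^m := by positivity
  have e : (N:ℝ)^m = (N:ℝ)^(m-1) * N := by
    rw [← pow_succ]; congr 1; omega
  have n2N : ‖((N:ℕ):ℚ_[2])^m‖ = ((2:ℝ)^(a*m))⁻¹ := by rw [hN]; exact norm2_N_pow a b m
  have n3N : ‖((N:ℕ):ℚ_[3])^m‖ = ((3:ℝ)^(b*m))⁻¹ := by rw [hN]; exact norm3_N_pow a b m
  have hN2ne : ((N:ℕ):ℚ_[2])^m ≠ 0 := by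
    apply pow_ne_zero; exact_mod_cast Nat.cast_ne_zero.mpr (by omega)
  have hN3ne : ((N:ℕ):ℚ_[3])^m ≠ 0 := by
    apply pow_ne_zero; exact_mod_cast Nat.cast_ne_zero.mpr (by omega)
  have hact : act ((N:ℚ)^(-(m:ℤ))) (t,u,v)
      = (((((N:ℝ)^m)⁻¹*t, ((N:ℚ_[2])^m)⁻¹*u, ((N:ℚ_[3])^m)⁻¹*v)) : G) := by
    simp only [act]
    have c1 : (((N:ℚ)^(-(m:ℤ)) : ℚ) : ℝ) = ((N:ℝ)^m)⁻¹ := by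
      push_cast
      rw [zpow_neg, zpow_natCast]
    have c2 : (((N:ℚ)^(-(m:ℤ)) : ℚ) : ℚ_[2]) = (((N:ℕ):ℚ_[2])^m)⁻¹ := by
      push_cast
      rw [zpow_neg, zpow_natCast]
    have c3 : (((N:ℚ)^(-(m:ℤ)) : ℚ) : ℚ_[3]) = (((N:ℕ):ℚ_[3])^m)⁻¹ := by
      push_cast
      rw [zpow_neg, zpow_natCast]
    rw [c1, c2, c3]
  rw [hact, rep_mem_A_iff hrep hk]
  constructor
  · rintro ⟨q, hq, hA⟩
    have hsub : (((((N:ℝ)^m)⁻¹*t, ((N:ℚ_[2])^m)⁻¹*u, ((N:ℚ_[3])^m)⁻¹*v)) : G) - Δ q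
        = (((((N:ℝ)^m)⁻¹*t - ((q:ℚ):ℝ), ((N:ℚ_[2])^m)⁻¹*u - ((q:ℚ):ℚ_[2]),
            ((N:ℚ_[3])^m)⁻¹*v - ((q:ℚ):ℚ_[3]))) : G) := rfl
    rw [hsub, tuple_mem_A_iff] at hA
    obtain ⟨⟨h1, h2⟩, h3, h4⟩ := hA
    -- the scaled q is an integer
    set q' : ℚ := (N:ℚ)^m * q with hq'def
    have hq' : q' ∈ zInv6 := by
      have : ((N:ℚ))^m = (((N:ℤ)^m : ℤ) : ℚ) := by push_cast; ring
      rw [hq'def, this]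
      exact zInv6_int_mul _ hq
    have d2 : ‖u - ((q':ℚ):ℚ_[2])‖ ≤ ((2:ℝ)^(a*m))⁻¹ := by
      have e2 : u - ((q':ℚ):ℚ_[2]) = ((N:ℚ_[2])^m) * (((N:ℚ_[2])^m)⁻¹*u - ((q:ℚ):ℚ_[2])) := by
        rw [hq'def]
        push_cast
        field_simp
      rw [e2, norm_mul, n2N]
      calc ((2:ℝ)^(a*m))⁻¹ * ‖((N:ℚ_[2])^m)⁻¹*u - ((q:ℚ):ℚ_[2])‖ ≤ ((2:ℝ)^(a*m))⁻¹ * 1 := by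
            apply mul_le_mul_of_nonneg_left h3 (by positivity)
        _ = ((2:ℝ)^(a*m))⁻¹ := by ring
    have d3 : ‖v - ((q':ℚ):ℚ_[3])‖ ≤ ((3:ℝ)^(b*m))⁻¹ := by
      have e3 : v - ((q':ℚ):ℚ_[3]) = ((N:ℚ_[3])^m) * (((N:ℚ_[3])^m)⁻¹*v - ((q:ℚ):ℚ_[3])) := by
        rw [hq'def]
        push_cast
        field_simp
      rw [e3, norm_mul, n3N]
      calc ((3:ℝ)^(b*m))⁻¹ * ‖((N:ℚ_[3])^m)⁻¹*v - ((q:ℚ):ℚ_[3])‖ ≤ ((3:ℝ)^(b*m))⁻¹ * 1 := by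
            apply mul_le_mul_of_nonneg_left h4 (by positivity)
        _ = ((3:ℝ)^(b*m))⁻¹ := by ring
    have n2 : ‖((q':ℚ):ℚ_[2])‖ ≤ 1 := by
      have e2 : ((q':ℚ):ℚ_[2]) = u - (u - ((q':ℚ):ℚ_[2])) := by ring
      rw [e2]
      refine le_trans (padic_sub_max _ _) (max_le hu (le_trans d2 ?_))
      apply inv_le_one_of_one_le₀; exact one_le_pow₀ (by norm_num)
    have n3 : ‖((q':ℚ):ℚ_[3])‖ ≤ 1 := by
      have e3 : ((q':ℚ):ℚ_[3]) = v - (v - ((q':ℚ):ℚ_[3])) := by ring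
      rw [e3]
      refine le_trans (padic_sub_max _ _) (max_le hv (le_trans d3 ?_))
      apply inv_le_one_of_one_le₀; exact one_le_pow₀ (by norm_num)
    obtain ⟨c, hc⟩ := int_of_zInv6 hq' n2 n3
    have hqc : (q : ℚ) = (c:ℚ) / (N:ℚ)^m := by
      rw [← hc, hq'def]
      field_simp
    have hqcR : ((q:ℚ):ℝ) = (c:ℝ) / (N:ℝ)^m := by
      rw [hqc]; push_cast; ring
    rw [hqcR] at h1 h2
    -- real bounds on c
    have H1 : (k:ℝ)*(N:ℝ)^(m-1) ≤ t - c := by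
      calc (k:ℝ)*(N:ℝ)^(m-1) = (k:ℝ)/N * (N:ℝ)^m := by rw [e]; field_simp
        _ ≤ (((N:ℝ)^m)⁻¹*t - (c:ℝ)/(N:ℝ)^m) * (N:ℝ)^m := mul_le_mul_of_nonneg_right h1 hNm.le
        _ = t - c := by field_simp
    have H2 : t - c < ((k:ℝ)+1)*(N:ℝ)^(m-1) := by
      calc t - c = (((N:ℝ)^m)⁻¹*t - (c:ℝ)/(N:ℝ)^m) * (N:ℝ)^m := by field_simp
        _ < ((k:ℝ)+1)/N * (N:ℝ)^m := mul_lt_mul_of_pos_right h2 hNm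
        _ = ((k:ℝ)+1)*(N:ℝ)^(m-1) := by rw [e]; field_simp
    refine ⟨c, ⟨?_, ?_⟩, by rw [hc] at d2; exact_mod_cast d2, by rw [hc] at d3; exact_mod_cast d3⟩
    · have h' : ((-((k:ℤ)+1) * (N:ℤ)^(m-1) : ℤ) : ℝ) < (c:ℝ) := by push_cast; linarith
      exact_mod_cast h'
    · have h' : (c:ℝ) < ((-(k:ℤ) * (N:ℤ)^(m-1) + 1 : ℤ) : ℝ) := by push_cast; linarith
      have hzz : c < (-(k:ℤ) * (N:ℤ)^(m-1) + 1 : ℤ) := by exact_mod_cast h'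
      omega
  · rintro ⟨c, ⟨hc1, hc2⟩, d2, d3⟩
    refine ⟨(c:ℚ)/(N:ℚ)^m, ?_, ?_⟩
    · have hNq : ((N:ℚ))^m = 2^(a*m)*3^(b*m) := by
        rw [hN]; push_cast; rw [mul_pow, ← pow_mul, ← pow_mul]
      rw [hNq]
      exact zInv6_div23 c (a*m) (b*m)
    have hsub : (((((N:ℝ)^m)⁻¹*t, ((N:ℚ_[2])^m)⁻¹*u, ((N:ℚ_[3])^m)⁻¹*v)) : G) - Δ ((c:ℚ)/(N:ℚ)^m)
        = (((((N:ℝ)^m)⁻¹*t - (((c:ℚ)/(N:ℚ)^m : ℚ):ℝ), ((N:ℚ_[2])^m)⁻¹*u - (((c:ℚ)/(N:ℚ)^m : ℚ):ℚ_[2]),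
            ((N:ℚ_[3])^m)⁻¹*v - (((c:ℚ)/(N:ℚ)^m : ℚ):ℚ_[3]))) : G) := rfl
    rw [hsub, tuple_mem_A_iff]
    have hcR : (((c:ℚ)/(N:ℚ)^m : ℚ):ℝ) = (c:ℝ)/(N:ℝ)^m := by push_cast; ring
    have hc2R : (c:ℝ) ≤ -(k:ℝ) * (N:ℝ)^(m-1) := by
      have h' : ((c:ℤ):ℝ) ≤ ((-(k:ℤ) * (N:ℤ)^(m-1) : ℤ):ℝ) := by exact_mod_cast hc2
      push_cast at h'; linarith
    have hc1R : -((k:ℝ)+1) * (N:ℝ)^(m-1) + 1 ≤ (c:ℝ) := by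
      have h0 : (-((k:ℤ)+1) * (N:ℤ)^(m-1) + 1 : ℤ) ≤ c := by omega
      have h' : ((-((k:ℤ)+1) * (N:ℤ)^(m-1) + 1 : ℤ):ℝ) ≤ ((c:ℤ):ℝ) := by exact_mod_cast h0
      push_cast at h'; linarith
    constructor
    · rw [hcR]
      have key1 : (k:ℝ)*(N:ℝ)^(m-1) ≤ t - c := by linarith
      have key2 : t - c < ((k:ℝ)+1)*(N:ℝ)^(m-1) := by linarith
      constructor
      · rw [show ((N:ℝ)^m)⁻¹*t - (c:ℝ)/(N:ℝ)^m = (t - c)/(N:ℝ)^m by field_simp]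
        rw [div_le_div_iff₀ hNpos hNm, e]
        linarith [mul_le_mul_of_nonneg_right key1 hNpos.le]
      · rw [show ((N:ℝ)^m)⁻¹*t - (c:ℝ)/(N:ℝ)^m = (t - c)/(N:ℝ)^m by field_simp]
        rw [div_lt_div_iff₀ hNm hNpos, e]
        linarith [mul_lt_mul_of_pos_right key2 hNpos]
    constructor
    · have e2 : ((N:ℚ_[2])^m)⁻¹*u - (((c:ℚ)/(N:ℚ)^m : ℚ):ℚ_[2]) = ((N:ℚ_[2])^m)⁻¹ * (u - (c:ℚ_[2])) := by
        push_cast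
        field_simp
      rw [e2, norm_mul, norm_inv, n2N, inv_inv]
      calc (2:ℝ)^(a*m) * ‖u - (c:ℚ_[2])‖ ≤ (2:ℝ)^(a*m) * ((2:ℝ)^(a*m))⁻¹ := by
            apply mul_le_mul_of_nonneg_left d2 (by positivity)
        _ = 1 := by field_simp
    · have e3 : ((N:ℚ_[3])^m)⁻¹*v - (((c:ℚ)/(N:ℚ)^m : ℚ):ℚ_[3]) = ((N:ℚ_[3])^m)⁻¹ * (v - (c:ℚ_[3])) := by
        push_cast
        field_simp
      rw [e3, norm_mul, norm_inv, n3N, inv_inv]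
      calc (3:ℝ)^(b*m) * ‖v - (c:ℚ_[3])‖ ≤ (3:ℝ)^(b*m) * ((3:ℝ)^(b*m))⁻¹ := by
            apply mul_le_mul_of_nonneg_left d3 (by positivity)
        _ = 1 := by field_simp

lemma digit_nonneg (N : ℤ) (hN : 0 ≤ N) (k : ℕ) (c : ℕ → ℤ) (h0 : ∀ j, j < k → 0 ≤ c j)
    (e : ℕ → ℕ) : 0 ≤ ∑ j ∈ Finset.range k, c j * N ^ (e j) :=
  Finset.sum_nonneg fun j hj =>
    mul_nonneg (h0 j (Finset.mem_range.mp hj)) (pow_nonneg hN _)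

lemma digit_lt (N : ℤ) (hN : 1 ≤ N) (k : ℕ) (c : ℕ → ℤ)
    (h0 : ∀ j, j < k → 0 ≤ c j) (h1 : ∀ j, j < k → c j < N) :
    ∑ j ∈ Finset.range k, c j * N ^ j < N ^ k := by
  induction k with
  | zero => simp
  | succ k ih =>
    rw [Finset.sum_range_succ, pow_succ]
    have hik := ih (fun j hj => h0 j (by omega)) (fun j hj => h1 j (by omega))
    have hNk : (0:ℤ) < N^k := by positivity
    have h1k : c k ≤ N - 1 := by have := h1 k (by omega); omega
    have := mul_le_mul_of_nonneg_right h1k hNk.le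
    linarith

lemma Ssum_eq (N : ℤ) (c : ℕ → ℤ) (m : ℕ) :
    ∑ j ∈ Finset.range (m+1), c j * N ^ (m - j)
      = (∑ j ∈ Finset.range m, c j * N ^ (m - 1 - j)) * N + c m := by
  rw [Finset.sum_range_succ, Nat.sub_self, pow_zero, mul_one, Finset.sum_mul]
  congr 1
  apply Finset.sum_congr rfl
  intro j hj
  rw [Finset.mem_range] at hj
  rw [mul_assoc, ← pow_succ]
  congr 2
  omega

lemma digit_lt' (N : ℤ) (hN : 1 ≤ N) (k : ℕ) (c : ℕ → ℤ)
    (h0 : ∀ j, j < k → 0 ≤ c j) (h1 : ∀ j, j < k → c j < N) :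
    ∑ j ∈ Finset.range k, c j * N ^ (k - 1 - j) < N ^ k := by
  induction k with
  | zero => simp
  | succ k ih =>
    have hrw : ∑ j ∈ Finset.range (k+1), c j * N ^ (k + 1 - 1 - j)
        = ∑ j ∈ Finset.range (k+1), c j * N ^ (k - j) := rfl
    rw [hrw, Ssum_eq, pow_succ]
    have hik := ih (fun j hj => h0 j (by omega)) (fun j hj => h1 j (by omega))
    have hNk : (0:ℤ) < N^k := by positivity
    have h1k : c k ≤ N - 1 := by have := h1 k (by omega); omega
    nlinarith [hik, mul_le_mul_of_nonneg_right hik (by linarith : (0:ℤ) ≤ N)]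

lemma real_cond (N : ℕ) (hN1 : 1 ≤ N) (n : ℕ) (c : ℕ → ℕ) (hc : ∀ m, m ≤ n → c m < N)
    (t : ℝ) (ht0 : 0 ≤ t) (ht1 : t < 1) :
    (∀ m : ℕ, m ≤ n → ∃ q : ℤ,
        (q:ℝ) + (c m : ℝ)/N ≤ (N:ℝ)^m * t ∧ (N:ℝ)^m * t < q + ((c m : ℝ)+1)/N)
    ↔ (((∑ j ∈ Finset.range (n+1), (c j : ℤ) * (N:ℤ)^(n-j) : ℤ) : ℝ) ≤ (N:ℝ)^(n+1) * t
        ∧ (N:ℝ)^(n+1)*t < ((∑ j ∈ Finset.range (n+1), (c j : ℤ) * (N:ℤ)^(n-j) : ℤ) : ℝ) + 1) := by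
  have hNpos : (0:ℝ) < N := by exact_mod_cast hN1
  set S : ℕ → ℤ := fun m => ∑ j ∈ Finset.range (m+1), (c j : ℤ) * (N:ℤ)^(m-j) with hS
  set T : ℕ → ℤ := fun m => ∑ j ∈ Finset.range m, (c j : ℤ) * (N:ℤ)^(m-1-j) with hT
  have hST : ∀ m, S m = T m * N + c m := fun m => Ssum_eq (N:ℤ) _ m
  have hTS : ∀ m, T (m+1) = S m := fun m => rfl
  -- converted form of condition
  have conv : ∀ (m : ℕ) (q : ℤ),
      ((q:ℝ) + (c m : ℝ)/N ≤ (N:ℝ)^m * t ∧ (N:ℝ)^m * t < q + ((c m : ℝ)+1)/N)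
      ↔ ((q:ℝ)*N + c m ≤ (N:ℝ)^(m+1) * t ∧ (N:ℝ)^(m+1) * t < (q:ℝ)*N + c m + 1) := by
    intro m q
    have e1 : (q:ℝ) + (c m : ℝ)/N = ((q:ℝ)*N + c m)/N := by field_simp
    have e2 : (q:ℝ) + ((c m : ℝ)+1)/N = ((q:ℝ)*N + c m + 1)/N := by field_simp; ring
    have e3 : (N:ℝ)^(m+1) * t = (N:ℝ)^m * t * N := by rw [pow_succ]; ring
    rw [e1, e2, e3, div_le_iff₀ hNpos, lt_div_iff₀ hNpos]
  constructor
  · intro h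
    have claim : ∀ m, m ≤ n → ((S m : ℝ) ≤ (N:ℝ)^(m+1) * t ∧ (N:ℝ)^(m+1) * t < (S m : ℝ) + 1) := by
      intro m
      induction m with
      | zero =>
        intro _
        obtain ⟨q, hq⟩ := h 0 (by omega)
        rw [conv 0 q] at hq
        have hc0 : ((c 0 : ℝ)) + 1 ≤ N := by exact_mod_cast hc 0 (by omega)
        have ht' : (N:ℝ)^(0+1) * t < N := by
          have : (N:ℝ)^(0+1) = N := by ring
          rw [this]; nlinarith
        have ht'' : (0:ℝ) ≤ (N:ℝ)^(0+1) * t := by positivity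
        have hq0 : q = 0 := by
          have hq1 : (q:ℝ)*N < N := by nlinarith [hq.1]
          have hq2 : (0:ℝ) < (q:ℝ)*N + N := by nlinarith [hq.2]
          have l1 : (q:ℝ) < 1 := by nlinarith
          have l2 : (-1:ℝ) < (q:ℝ) := by nlinarith
          have l1' : q < 1 := by exact_mod_cast l1
          have l2' : -1 < q := by exact_mod_cast l2
          omega
        have hS0 : S 0 = (c 0 : ℤ) := by simp [hS]
        rw [hq0] at hq
        rw [hS0]
        push_cast at hq ⊢
        constructor <;> linarith [hq.1, hq.2]
      | succ m ih =>
        intro hmn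
        have ihm := ih (by omega)
        obtain ⟨q, hq⟩ := h (m+1) hmn
        rw [conv (m+1) q] at hq
        have hcm : ((c (m+1) : ℝ)) + 1 ≤ N := by exact_mod_cast hc (m+1) hmn
        have hcm0 : (0:ℝ) ≤ (c (m+1) : ℝ) := by positivity
        have e3 : (N:ℝ)^(m+1+1) * t = (N:ℝ)^(m+1) * t * N := by rw [pow_succ]; ring
        have hqS : q = S m := by
          have l1 : (q:ℝ) < (S m : ℝ) + 1 := by
            nlinarith [hq.1, mul_lt_mul_of_pos_right ihm.2 hNpos]
          have l2 : ((S m : ℝ)) < (q:ℝ) + 1 := by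
            nlinarith [hq.2, mul_le_mul_of_nonneg_right ihm.1 hNpos.le]
          have l1' : q < S m + 1 := by exact_mod_cast l1
          have l2' : S m < q + 1 := by exact_mod_cast l2
          omega
        have hSm : (S (m+1) : ℝ) = (S m : ℝ) * N + (c (m+1) : ℝ) := by
          have := hST (m+1)
          rw [hTS m] at this
          exact_mod_cast congrArg (fun z : ℤ => (z:ℝ)) this
        rw [hqS] at hq
        rw [hSm]
        exact ⟨by linarith [hq.1], by linarith [hq.2]⟩
    exact claim n (le_refl n)
  · rintro ⟨h1, h2⟩ m hm
    have claim : ∀ d m', m' + d = n →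
        ((S m' : ℝ) ≤ (N:ℝ)^(m'+1) * t ∧ (N:ℝ)^(m'+1) * t < (S m' : ℝ) + 1) := by
      intro d
      induction d with
      | zero => intro m' hm'; subst hm'; simpa using ⟨h1, h2⟩
      | succ d ih =>
        intro m' hm'
        have ihm := ih (m'+1) (by omega)
        have hSm : (S (m'+1) : ℝ) = (S m' : ℝ) * N + (c (m'+1) : ℝ) := by
          have := hST (m'+1)
          rw [hTS m'] at this
          exact_mod_cast congrArg (fun z : ℤ => (z:ℝ)) this
        have hcm : ((c (m'+1) : ℝ)) + 1 ≤ N := by exact_mod_cast hc (m'+1) (by omega)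
        have hcm0 : (0:ℝ) ≤ (c (m'+1) : ℝ) := by positivity
        have e3 : (N:ℝ)^(m'+1+1) * t = (N:ℝ)^(m'+1) * t * N := by rw [pow_succ]; ring
        rw [hSm, e3] at ihm
        constructor
        · have : (S m' : ℝ) * N ≤ ((N:ℝ)^(m'+1) * t) * N := by nlinarith [ihm.1]
          exact le_of_mul_le_mul_right this hNpos
        · have : ((N:ℝ)^(m'+1) * t) * N < ((S m' : ℝ) + 1) * N := by nlinarith [ihm.2]
          exact lt_of_mul_lt_mul_right this hNpos.le
    have hSm := claim (n - m) m (by omega)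
    refine ⟨T m, ?_⟩
    rw [conv m (T m)]
    have hTm : (T m : ℝ)*N + (c m : ℝ) = (S m : ℝ) := by
      have := hST m
      exact_mod_cast congrArg (fun z : ℤ => (z:ℝ)) this.symm
    rw [hTm]
    exact hSm

lemma norm2_int_le {d : ℤ} {k : ℕ} (h : (2:ℤ)^k ∣ d) : ‖(d:ℚ_[2])‖ ≤ ((2:ℝ)^k)⁻¹ := by
  have := (norm_int_le_pow_inv (p:=2) d k).mpr (by exact_mod_cast h)
  simpa using this

lemma norm2_int_dvd {d : ℤ} {k : ℕ} (h : ‖(d:ℚ_[2])‖ ≤ ((2:ℝ)^k)⁻¹) : (2:ℤ)^k ∣ d := by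
  have := (norm_int_le_pow_inv (p:=2) d k).mp (by
    have e : (((2:ℕ):ℝ)^k)⁻¹ = ((2:ℝ)^k)⁻¹ := by norm_num
    rw [e]; exact h)
  exact_mod_cast this

lemma norm3_int_le {d : ℤ} {k : ℕ} (h : (3:ℤ)^k ∣ d) : ‖(d:ℚ_[3])‖ ≤ ((3:ℝ)^k)⁻¹ := by
  have := (norm_int_le_pow_inv (p:=3) d k).mpr (by exact_mod_cast h)
  simpa using this

lemma norm3_int_dvd {d : ℤ} {k : ℕ} (h : ‖(d:ℚ_[3])‖ ≤ ((3:ℝ)^k)⁻¹) : (3:ℤ)^k ∣ d := by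
  have := (norm_int_le_pow_inv (p:=3) d k).mp (by
    have e : (((3:ℕ):ℝ)^k)⁻¹ = ((3:ℝ)^k)⁻¹ := by norm_num
    rw [e]; exact h)
  exact_mod_cast this

lemma padic_cond (a b n N : ℕ) (hn : 1 ≤ n) (hN : N = 2^a*3^b)
    (c : ℕ → ℕ) (hc : ∀ m, 1 ≤ m → m ≤ n → c m < N)
    (u : ℚ_[2]) (v : ℚ_[3]) (hu : ‖u‖ ≤ 1) (hv : ‖v‖ ≤ 1) :
    (∀ m : ℕ, 1 ≤ m → m ≤ n → ∃ d : ℤ,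
        (-((c m:ℤ)+1) * (N:ℤ)^(m-1) < d ∧ d ≤ -(c m:ℤ) * (N:ℤ)^(m-1)) ∧
        ‖u - (d:ℚ_[2])‖ ≤ ((2:ℝ)^(a*m))⁻¹ ∧ ‖v - (d:ℚ_[3])‖ ≤ ((3:ℝ)^(b*m))⁻¹)
    ↔ (‖u + (((∑ j ∈ Finset.range n, (c (j+1) : ℤ) * (N:ℤ)^j : ℤ)):ℚ_[2])‖ ≤ ((2:ℝ)^(a*n))⁻¹
      ∧ ‖v + (((∑ j ∈ Finset.range n, (c (j+1) : ℤ) * (N:ℤ)^j : ℤ)):ℚ_[3])‖ ≤ ((3:ℝ)^(b*n))⁻¹) := by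
  have hNpos : (0:ℤ) < (N:ℤ) := by
    have : 0 < N := by rw [hN]; positivity
    exact_mod_cast this
  set C : ℕ → ℤ := fun m => ∑ j ∈ Finset.range m, (c (j+1) : ℤ) * (N:ℤ)^j with hC
  have hCsucc : ∀ m, C (m+1) = C m + (c (m+1) : ℤ) * (N:ℤ)^m := by
    intro m; rw [hC]; exact Finset.sum_range_succ _ _
  have hC0 : ∀ m, 0 ≤ C m := by
    intro m
    exact Finset.sum_nonneg fun j _ => mul_nonneg (by positivity) (pow_nonneg hNpos.le _)
  have hClt : ∀ m, m ≤ n → C m < (N:ℤ)^m := by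
    intro m hm
    apply digit_lt (N:ℤ) (by omega) m _ (fun j _ => by positivity)
    intro j hj
    exact_mod_cast hc (j+1) (by omega) (by omega)
  have hNpow : ∀ m : ℕ, (N:ℤ)^m = 2^(a*m) * 3^(b*m) := by
    intro m
    rw [hN]; push_cast; rw [mul_pow, ← pow_mul, ← pow_mul]
  have hCdvd2 : ∀ m1 m2 : ℕ, m1 ≤ m2 → m2 ≤ n → (2:ℤ)^(a*m1) ∣ (C m2 - C m1) := by
    intro m1 m2 h12 _
    rw [hC]
    simp only
    rw [← Finset.sum_Ico_eq_sub _ h12]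
    apply Finset.dvd_sum
    intro j hj
    rw [Finset.mem_Ico] at hj
    apply Dvd.dvd.mul_left
    rw [hNpow j]
    exact Dvd.dvd.mul_right (pow_dvd_pow 2 (Nat.mul_le_mul_left a hj.1)) _
  have hCdvd3 : ∀ m1 m2 : ℕ, m1 ≤ m2 → m2 ≤ n → (3:ℤ)^(b*m1) ∣ (C m2 - C m1) := by
    intro m1 m2 h12 _
    rw [hC]
    simp only
    rw [← Finset.sum_Ico_eq_sub _ h12]
    apply Finset.dvd_sum
    intro j hj
    rw [Finset.mem_Ico] at hj
    apply Dvd.dvd.mul_left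
    rw [hNpow j]
    exact dvd_mul_of_dvd_right (pow_dvd_pow 3 (Nat.mul_le_mul_left b hj.1)) _
  constructor
  · intro h
    have claim : ∀ m, 1 ≤ m → m ≤ n → ∀ d : ℤ,
        ((-((c m:ℤ)+1) * (N:ℤ)^(m-1) < d ∧ d ≤ -(c m:ℤ) * (N:ℤ)^(m-1)) ∧
          ‖u - (d:ℚ_[2])‖ ≤ ((2:ℝ)^(a*m))⁻¹ ∧ ‖v - (d:ℚ_[3])‖ ≤ ((3:ℝ)^(b*m))⁻¹)
        → d = -(C m) := by
      intro m hm
      induction m, hm using Nat.le_induction with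
      | base =>
        intro _ d ⟨⟨hd1, hd2⟩, _, _⟩
        have hC1 : C 1 = (c 1 : ℤ) := by simp [hC]
        simp only [Nat.sub_self, pow_zero, mul_one] at hd1 hd2
        rw [hC1]; omega
      | succ m hm1 ih =>
        intro hmn d' ⟨⟨hd1, hd2⟩, hn2, hn3⟩
        obtain ⟨d, ⟨hdi, hdn2, hdn3⟩⟩ := h m hm1 (by omega)
        have hd : d = -(C m) := ih (by omega) d ⟨hdi, hdn2, hdn3⟩
        subst hd
        -- N^m divides d - d'
        have hdiff2 : ‖((-(C m) - d' : ℤ):ℚ_[2])‖ ≤ ((2:ℝ)^(a*m))⁻¹ := by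
          have e : ((-(C m) - d' : ℤ):ℚ_[2]) = (u - (d':ℚ_[2])) - (u - ((-(C m):ℤ):ℚ_[2])) := by
            push_cast; ring
          rw [e]
          refine le_trans (padic_sub_max _ _) (max_le (le_trans hn2 ?_) hdn2)
          apply inv_anti₀ (by positivity)
          apply pow_le_pow_right₀ (by norm_num)
          exact Nat.mul_le_mul_left a (by omega)
        have hdiff3 : ‖((-(C m) - d' : ℤ):ℚ_[3])‖ ≤ ((3:ℝ)^(b*m))⁻¹ := by
          have e : ((-(C m) - d' : ℤ):ℚ_[3]) = (v - (d':ℚ_[3])) - (v - ((-(C m):ℤ):ℚ_[3])) := by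
            push_cast; ring
          rw [e]
          refine le_trans (padic_sub_max _ _) (max_le (le_trans hn3 ?_) hdn3)
          apply inv_anti₀ (by positivity)
          apply pow_le_pow_right₀ (by norm_num)
          exact Nat.mul_le_mul_left b (by omega)
        have hdvd2 := norm2_int_dvd hdiff2
        have hdvd3 := norm3_int_dvd hdiff3
        have hcop : IsCoprime ((2:ℤ)^(a*m)) ((3:ℤ)^(b*m)) := by
          apply IsCoprime.pow
          rw [Int.isCoprime_iff_gcd_eq_one]; decide
        obtain ⟨w, hw⟩ := hcop.mul_dvd hdvd2 hdvd3
        rw [← hNpow m] at hw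
        -- determine w
        have hNm : (0:ℤ) < (N:ℤ)^m := by positivity
        have hCm0 := hC0 m
        have hCmlt := hClt m (by omega)
        have hcm1 : ((c (m+1):ℤ)) ≥ 0 := by positivity
        simp only [Nat.add_sub_cancel] at hd1 hd2
        have hd'e : d' = -(C m) - (N:ℤ)^m * w := by omega
        have hw1 : (((c (m+1):ℤ)) - 1) * (N:ℤ)^m < w * (N:ℤ)^m := by nlinarith
        have hw2 : w * (N:ℤ)^m < (((c (m+1):ℤ)) + 1) * (N:ℤ)^m := by nlinarith
        have hw1' := lt_of_mul_lt_mul_right hw1 hNm.le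
        have hw2' := lt_of_mul_lt_mul_right hw2 hNm.le
        have hwe : w = (c (m+1):ℤ) := by omega
        rw [hCsucc m, hd'e, hwe]
        ring
    obtain ⟨d, hd⟩ := h n hn (le_refl n)
    have := claim n hn (le_refl n) d hd
    subst this
    constructor
    · have e : u + ((C n:ℤ):ℚ_[2]) = u - ((-(C n):ℤ):ℚ_[2]) := by push_cast; ring
      rw [← hC] at *
      rw [e]; exact hd.2.1
    · have e : v + ((C n:ℤ):ℚ_[3]) = v - ((-(C n):ℤ):ℚ_[3]) := by push_cast; ring
      rw [← hC] at *
      rw [e]; exact hd.2.2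
  · rintro ⟨h2, h3⟩ m hm1 hmn
    refine ⟨-(C m), ⟨?_, ?_⟩, ?_, ?_⟩
    · have := hCsucc (m-1)
      rw [show m - 1 + 1 = m by omega] at this
      have h0 := hC0 (m-1)
      have hlt := hClt (m-1) (by omega)
      nlinarith [this, h0, hlt]
    · have := hCsucc (m-1)
      rw [show m - 1 + 1 = m by omega] at this
      have h0 := hC0 (m-1)
      nlinarith [this, h0]
    · have e : u - ((-(C m):ℤ):ℚ_[2]) = (u + ((C n:ℤ):ℚ_[2])) - ((C n - C m : ℤ):ℚ_[2]) := by
        push_cast; ring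
      rw [e]
      refine le_trans (padic_sub_max _ _) (max_le (le_trans h2 ?_) ?_)
      · apply inv_anti₀ (by positivity)
        apply pow_le_pow_right₀ (by norm_num)
        exact Nat.mul_le_mul_left a hmn
      · exact norm2_int_le (hCdvd2 m n hmn (le_refl n))
    · have e : v - ((-(C m):ℤ):ℚ_[3]) = (v + ((C n:ℤ):ℚ_[3])) - ((C n - C m : ℤ):ℚ_[3]) := by
        push_cast; ring
      rw [e]
      refine le_trans (padic_sub_max _ _) (max_le (le_trans h3 ?_) ?_)
      · apply inv_anti₀ (by positivity)
        apply pow_le_pow_right₀ (by norm_num)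
        exact Nat.mul_le_mul_left b hmn
      · exact norm3_int_le (hCdvd3 m n hmn (le_refl n))


/-- An atom of the refined partition `⋁_{j=-n}^n α^j(ξ)` is a single rectangle
`[D, D+1/N^{n+1}) × (2^{an}ℤ₂ - C) × (3^{bn}ℤ₃ - C)`, where
`D = Σ_{m=0}^n i_{-m}/N^{m+1}` and `C = Σ_{m=1}^n i_m N^{m-1}`. -/
theorem refined_atom (rep : G → G) (hrep : ∀ x : G, rep x ∈ F ∧ x - rep x ∈ Γ)
    (a b : ℕ) (ha : 1 ≤ a) (hb : 1 ≤ b) (N : ℕ) (hN : N = 2 ^ a * 3 ^ b)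
    (n : ℕ) (hn : 1 ≤ n) (i : ℤ → ℕ) (hi : ∀ j : ℤ, -(n : ℤ) ≤ j → j ≤ n → i j < N) :
    {x : G | x ∈ F ∧
        (∀ m : ℕ, m ≤ n → rep (act ((N : ℚ) ^ (m : ℤ)) x) ∈ A N (i (-(m : ℤ)))) ∧
        (∀ m : ℕ, 1 ≤ m → m ≤ n → rep (act ((N : ℚ) ^ (-(m : ℤ))) x) ∈ A N (i (m : ℤ)))} =
      {x : G |
        x.1 ∈ Set.Ico (∑ m ∈ Finset.range (n + 1), (i (-(m : ℤ)) : ℝ) / (N : ℝ) ^ (m + 1))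
          ((∑ m ∈ Finset.range (n + 1), (i (-(m : ℤ)) : ℝ) / (N : ℝ) ^ (m + 1))
            + 1 / (N : ℝ) ^ (n + 1)) ∧
        (∃ z : ℚ_[2], ‖z‖ ≤ 1 ∧
          x.2.1 = 2 ^ (a * n) * z
            - ((∑ m ∈ Finset.range n, i ((m : ℤ) + 1) * N ^ m : ℕ) : ℚ_[2])) ∧
        (∃ w : ℚ_[3], ‖w‖ ≤ 1 ∧
          x.2.2 = 3 ^ (b * n) * w
            - ((∑ m ∈ Finset.range n, i ((m : ℤ) + 1) * N ^ m : ℕ) : ℚ_[3]))} := by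
  have hN1 : 1 ≤ N := by rw [hN]; exact Nat.one_le_iff_ne_zero.mpr (by positivity)
  have hN2 : 2 ≤ N := by
    rw [hN]
    calc 2 = 2^1 := rfl
      _ ≤ 2^a := Nat.pow_le_pow_right (by norm_num) ha
      _ ≤ 2^a * 3^b := Nat.le_mul_of_pos_right _ (by positivity)
  have hNRpos : (0:ℝ) < N := by exact_mod_cast (by omega : 0 < N)
  have hNR1 : (0:ℝ) < (N:ℝ)^(n+1) := by positivity
  set S : ℤ := ∑ j ∈ Finset.range (n+1), (i (-(j:ℤ)) : ℤ) * (N:ℤ)^(n-j) with hSdef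
  set Cz : ℤ := ∑ j ∈ Finset.range n, (i ((j:ℤ)+1) : ℤ) * (N:ℤ)^j with hCdef
  have hiN : ∀ m : ℕ, m ≤ n → i (-(m:ℤ)) < N := fun m hm => hi _ (by omega) (by omega)
  have hiP : ∀ m : ℕ, 1 ≤ m → m ≤ n → i (m:ℤ) < N := fun m h1 h2 => hi _ (by omega) (by omega)
  have hS0 : (0:ℤ) ≤ S := by
    rw [hSdef]
    exact Finset.sum_nonneg fun j _ => mul_nonneg (Int.natCast_nonneg _)
      (pow_nonneg (Int.natCast_nonneg _) _)
  have hSlt : S < (N:ℤ)^(n+1) := by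
    rw [hSdef]
    exact digit_lt' (N:ℤ) (by exact_mod_cast hN1) (n+1) (fun j => (i (-(j:ℤ)):ℤ))
      (fun j _ => Int.natCast_nonneg _)
      (fun j hj => by show ((i (-(j:ℤ)):ℕ):ℤ) < ((N:ℕ):ℤ); exact_mod_cast hiN j (by omega))
  have hSltR : (S:ℝ) < (N:ℝ)^(n+1) := by exact_mod_cast hSlt
  have hS0R : (0:ℝ) ≤ (S:ℝ) := by exact_mod_cast hS0
  have hD : (∑ m ∈ Finset.range (n + 1), (i (-(m : ℤ)) : ℝ) / (N : ℝ) ^ (m + 1))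
      = (S:ℝ)/(N:ℝ)^(n+1) := by
    rw [eq_div_iff (ne_of_gt hNR1), Finset.sum_mul, hSdef]
    push_cast
    apply Finset.sum_congr rfl
    intro m hm
    rw [Finset.mem_range] at hm
    have he : (N:ℝ)^(n+1) = (N:ℝ)^(m+1) * (N:ℝ)^(n-m) := by
      rw [← pow_add]; congr 1; omega
    rw [he]
    field_simp
  -- identification of the two C sums
  have hCz' : (∑ j ∈ Finset.range n, (i (((j+1:ℕ)):ℤ) : ℤ) * (N:ℤ)^j) = Cz := by
    rw [hCdef]
    apply Finset.sum_congr rfl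
    intro j _
    congr 2
  have hCnat2 : ((∑ m ∈ Finset.range n, i ((m : ℤ) + 1) * N ^ m : ℕ) : ℚ_[2])
      = ((Cz:ℤ):ℚ_[2]) := by
    rw [hCdef]; push_cast; rfl
  have hCnat3 : ((∑ m ∈ Finset.range n, i ((m : ℤ) + 1) * N ^ m : ℕ) : ℚ_[3])
      = ((Cz:ℤ):ℚ_[3]) := by
    rw [hCdef]; push_cast; rfl
  ext x
  obtain ⟨t, u, v⟩ := x
  simp only [mem_setOf_eq]
  -- the p-adic rectangle characterizations
  have h2iff : (∃ z : ℚ_[2], ‖z‖ ≤ 1 ∧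
      u = 2^(a*n)*z - ((∑ m ∈ Finset.range n, i ((m : ℤ) + 1) * N ^ m : ℕ) : ℚ_[2]))
      ↔ ‖u + ((Cz:ℤ):ℚ_[2])‖ ≤ ((2:ℝ)^(a*n))⁻¹ := by
    rw [hCnat2]
    have hnorm : ‖(2:ℚ_[2])^(a*n)‖ = ((2:ℝ)^(a*n))⁻¹ := by
      rw [norm_pow, norm2_two, inv_pow]
    have hne : (2:ℚ_[2])^(a*n) ≠ 0 := pow_ne_zero _ two_ne_zero
    constructor
    · rintro ⟨z, hz, rfl⟩
      have e : 2^(a*n)*z - ((Cz:ℤ):ℚ_[2]) + ((Cz:ℤ):ℚ_[2]) = 2^(a*n)*z := by ring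
      rw [e, norm_mul, hnorm]
      calc ((2:ℝ)^(a*n))⁻¹ * ‖z‖ ≤ ((2:ℝ)^(a*n))⁻¹ * 1 :=
            mul_le_mul_of_nonneg_left hz (by positivity)
        _ = _ := mul_one _
    · intro hle
      refine ⟨(u + ((Cz:ℤ):ℚ_[2]))/2^(a*n), ?_, ?_⟩
      · rw [norm_div, hnorm, div_le_one (by positivity)]
        exact hle
      · field_simp
        ring
  have h3iff : (∃ w : ℚ_[3], ‖w‖ ≤ 1 ∧
      v = 3^(b*n)*w - ((∑ m ∈ Finset.range n, i ((m : ℤ) + 1) * N ^ m : ℕ) : ℚ_[3]))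
      ↔ ‖v + ((Cz:ℤ):ℚ_[3])‖ ≤ ((3:ℝ)^(b*n))⁻¹ := by
    rw [hCnat3]
    have hnorm : ‖(3:ℚ_[3])^(b*n)‖ = ((3:ℝ)^(b*n))⁻¹ := by
      rw [norm_pow, norm3_three, inv_pow]
    have hne : (3:ℚ_[3])^(b*n) ≠ 0 := pow_ne_zero _ three_ne_zero
    constructor
    · rintro ⟨w, hw, rfl⟩
      have e : 3^(b*n)*w - ((Cz:ℤ):ℚ_[3]) + ((Cz:ℤ):ℚ_[3]) = 3^(b*n)*w := by ring
      rw [e, norm_mul, hnorm]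
      calc ((3:ℝ)^(b*n))⁻¹ * ‖w‖ ≤ ((3:ℝ)^(b*n))⁻¹ * 1 :=
            mul_le_mul_of_nonneg_left hw (by positivity)
        _ = _ := mul_one _
    · intro hle
      refine ⟨(v + ((Cz:ℤ):ℚ_[3]))/3^(b*n), ?_, ?_⟩
      · rw [norm_div, hnorm, div_le_one (by positivity)]
        exact hle
      · field_simp
        ring
  constructor
  · rintro ⟨hF, hpos, hneg⟩
    obtain ⟨ht01, hu, hv⟩ := hF
    simp only [mem_Ico] at ht01
    obtain ⟨ht0, ht1⟩ := ht01
    -- real part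
    have hreal := (real_cond N hN1 n (fun m => i (-(m:ℤ))) hiN t ht0 ht1).mp
      (fun m hm => (pos_iff hrep hN2 t u v hu hv m (i (-(m:ℤ))) (hiN m hm)).mp (hpos m hm))
    -- p-adic part
    have hpad := (padic_cond a b n N hn hN (fun m => i (m:ℤ)) hiP u v hu hv).mp
      (fun m h1 h2 =>
        (neg_iff hrep a b hN t u v ht0 ht1 hu hv m (i (m:ℤ)) h1 (hiP m h1 h2)).mp
          (hneg m h1 h2))
    rw [hCz'] at hpad
    refine ⟨?_, h2iff.mpr hpad.1, h3iff.mpr hpad.2⟩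
    simp only [mem_Ico]
    rw [hD]
    constructor
    · rw [div_le_iff₀ hNR1]
      have := hreal.1
      linarith [this]
    · rw [← add_div, lt_div_iff₀ hNR1]
      have := hreal.2
      linarith [this]
  · rintro ⟨hIco, hz2, hz3⟩
    simp only [mem_Ico] at hIco
    rw [hD] at hIco
    have hp2 := h2iff.mp hz2
    have hp3 := h3iff.mp hz3
    have ht0 : 0 ≤ t := le_trans (by positivity) hIco.1
    have ht1 : t < 1 := by
      have h1 : t < (S:ℝ)/(N:ℝ)^(n+1) + 1/(N:ℝ)^(n+1) := hIco.2
      have h2 : (S:ℝ)/(N:ℝ)^(n+1) + 1/(N:ℝ)^(n+1) ≤ 1 := by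
        rw [← add_div, div_le_one hNR1]
        have : (S:ℝ) + 1 ≤ (N:ℝ)^(n+1) := by
          have : S + 1 ≤ (N:ℤ)^(n+1) := by omega
          exact_mod_cast this
        linarith
      linarith
    have hu : ‖u‖ ≤ 1 := by
      have e : u = (u + ((Cz:ℤ):ℚ_[2])) - ((Cz:ℤ):ℚ_[2]) := by ring
      rw [e]
      refine le_trans (padic_sub_max _ _) (max_le (le_trans hp2 ?_) ?_)
      · apply inv_le_one_of_one_le₀; exact one_le_pow₀ (by norm_num)
      · exact Padic.norm_int_le_one _
    have hv : ‖v‖ ≤ 1 := by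
      have e : v = (v + ((Cz:ℤ):ℚ_[3])) - ((Cz:ℤ):ℚ_[3]) := by ring
      rw [e]
      refine le_trans (padic_sub_max _ _) (max_le (le_trans hp3 ?_) ?_)
      · apply inv_le_one_of_one_le₀; exact one_le_pow₀ (by norm_num)
      · exact Padic.norm_int_le_one _
    have hSineq : ((S:ℝ) ≤ (N:ℝ)^(n+1) * t ∧ (N:ℝ)^(n+1)*t < (S:ℝ) + 1) := by
      constructor
      · have := (div_le_iff₀ hNR1).mp hIco.1
        linarith
      · have h := hIco.2
        rw [← add_div] at h
        have := (lt_div_iff₀ hNR1).mp h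
        linarith
    refine ⟨⟨by simp only [mem_Ico]; exact ⟨ht0, ht1⟩, hu, hv⟩, ?_, ?_⟩
    · intro m hm
      apply (pos_iff hrep hN2 t u v hu hv m (i (-(m:ℤ))) (hiN m hm)).mpr
      exact (real_cond N hN1 n (fun m => i (-(m:ℤ))) hiN t ht0 ht1).mpr hSineq m hm
    · intro m h1 h2
      apply (neg_iff hrep a b hN t u v ht0 ht1 hu hv m (i (m:ℤ)) h1 (hiP m h1 h2)).mpr
      have hpadic := (padic_cond a b n N hn hN (fun m => i (m:ℤ)) hiP u v hu hv).mpr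
      rw [hCz'] at hpadic
      exact hpadic ⟨hp2, hp3⟩ m h1 h2
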